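/- arXiv:2108.06260 — 2 statements merged into one kernel-verified Lean document; each statement's English description precedes it below -/
import Mathlib

section
/- For every nonnegative integer n, Bel_{n+1,λ}(1) = ∑_{m=0}^{n} C(n,m) · Bel_{m,λ}(1) · (1)_{n-m+1,λ}, where (1)_{j,λ} = 1·(1-λ)·(1-2λ)⋯(1-(j-1)λ). -/
open Finset

/-- Degenerate falling factorial `(x)_{n,λ}`. -/
noncomputable def degFall (lam x : ℝ) (n : ℕ) : ℝ := ∏ i ∈ Finset.range n, (x - i * lam)

set_option maxHeartbeats 1000000

lemma degFall_succ_right (lam x : ℝ) (n : ℕ) :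
    degFall lam x (n + 1) = degFall lam x n * (x - n * lam) := by
  simp [degFall, Finset.prod_range_succ]

lemma degFall_succ_left (lam x : ℝ) (n : ℕ) :
    degFall lam x (n + 1) = x * degFall lam (x - lam) n := by
  rw [degFall, Finset.prod_range_succ']
  rw [Nat.cast_zero, zero_mul, sub_zero, mul_comm]
  congr 1
  refine Finset.prod_congr rfl fun i _ => ?_
  show x - (i + 1 : ℕ) * lam = x - lam - i * lam
  push_cast
  ring

lemma degFall_add (lam x y : ℝ) (k : ℕ) :
    degFall lam (x + y) k =
      ∑ ij ∈ antidiagonal k, (k.choose ij.1 : ℝ) * (degFall lam x ij.1 * degFall lam y ij.2) := by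
  induction k with
  | zero => simp [degFall]
  | succ k ih =>
    rw [sum_antidiagonal_choose_succ_mul
      (fun i j => degFall lam x i * degFall lam y j) k,
      ← sum_add_distrib, degFall_succ_right, ih, sum_mul]
    refine sum_congr rfl fun ij hij => ?_
    have h : ij.1 + ij.2 = k := Finset.HasAntidiagonal.mem_antidiagonal.mp hij
    have hc : (k.choose ij.2 : ℝ) = (k.choose ij.1 : ℝ) := by
      rw [← h, Nat.choose_symm_add]
    rw [degFall_succ_right, degFall_succ_right, hc]
    have hk : (k : ℝ) = (ij.1 : ℝ) + ij.2 := by exact_mod_cast h.symm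
    rw [hk]; ring

lemma summable_one_add_pow_div_factorial (m : ℕ) :
    Summable (fun k : ℕ => ((k : ℝ) + 1) ^ m / (k.factorial : ℝ)) := by
  have h2 : Summable (fun k : ℕ => (2 : ℝ) ^ k / (k.factorial : ℝ)) := Real.summable_pow_div_factorial 2
  set C := ∑' k : ℕ, (2 : ℝ) ^ k / (k.factorial : ℝ) with hCdef
  have hC : ∀ k : ℕ, (2 : ℝ) ^ k / (k.factorial : ℝ) ≤ C := fun k =>
    Summable.le_tsum h2 k (fun j _ => by positivity)
  have hg : Summable (fun k : ℕ => ((k : ℝ)) ^ m * (1/2 : ℝ) ^ k) :=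
    summable_pow_mul_geometric_of_norm_lt_one m (by rw [Real.norm_eq_abs, abs_of_pos] <;> norm_num)
  have hg' : Summable (fun k : ℕ => (((k + 1 : ℕ) : ℝ)) ^ m * (1/2 : ℝ) ^ (k + 1)) :=
    (summable_nat_add_iff 1).2 hg
  have hg1 : Summable (fun k : ℕ => ((k : ℝ) + 1) ^ m * (1/2 : ℝ) ^ k) := by
    refine (hg'.mul_left 2).congr fun k => ?_
    push_cast
    ring
  refine Summable.of_nonneg_of_le (fun k => by positivity)
    (fun k => ?_) (hg1.mul_left C)
  have h2k : ((1:ℝ)/2) ^ k * 2 ^ k = 1 := by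
    rw [← mul_pow]; norm_num
  have heq : ((k : ℝ) + 1) ^ m / (k.factorial : ℝ) = (((k : ℝ) + 1) ^ m * (1/2) ^ k) * (2 ^ k / (k.factorial : ℝ)) := by
    rw [show (((k : ℝ) + 1) ^ m * (1/2) ^ k) * (2 ^ k / (k.factorial : ℝ)) =
      ((k : ℝ) + 1) ^ m * (((1/2 : ℝ) ^ k * 2 ^ k) / (k.factorial : ℝ)) by ring, h2k, mul_one_div]
  rw [heq]
  have hnn : (0:ℝ) ≤ ((k : ℝ) + 1) ^ m * (1/2) ^ k := by positivity
  calc (((k : ℝ) + 1) ^ m * (1/2) ^ k) * (2 ^ k / (k.factorial : ℝ))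
      ≤ (((k : ℝ) + 1) ^ m * (1/2) ^ k) * C := mul_le_mul_of_nonneg_left (hC k) hnn
    _ = C * (((k : ℝ) + 1) ^ m * (1/2) ^ k) := mul_comm _ _

lemma summable_degFall (lam a : ℝ) (m : ℕ) :
    Summable (fun k : ℕ => degFall lam ((k : ℝ) + a) m / (k.factorial : ℝ)) := by
  set c : ℝ := |a| + m * |lam| + 1 with hc
  have hc1 : 1 ≤ c := by nlinarith [abs_nonneg a, abs_nonneg lam, Nat.cast_nonneg (α := ℝ) m]
  have hc0 : 0 ≤ c := le_trans zero_le_one hc1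
  refine Summable.of_norm_bounded (g :=
    (fun k : ℕ => c ^ m * (((k : ℝ) + 1) ^ m / (k.factorial : ℝ))))
    ((summable_one_add_pow_div_factorial m).mul_left _) (fun k => ?_)
  rw [Real.norm_eq_abs, abs_div, abs_of_nonneg (a := ((k.factorial : ℝ))) (by positivity)]
  show |degFall lam ((k : ℝ) + a) m| / (k.factorial : ℝ) ≤ c ^ m * ((↑k + 1) ^ m / ↑k.factorial)
  rw [← mul_div_assoc, ← mul_pow]
  have hnum : |degFall lam ((k : ℝ) + a) m| ≤ (c * ((k : ℝ) + 1)) ^ m := by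
    rw [degFall, Finset.abs_prod]
    have : (c * ((k : ℝ) + 1)) ^ m = ∏ _i ∈ Finset.range m, (c * ((k : ℝ) + 1)) := by
      rw [Finset.prod_const, Finset.card_range]
    rw [this]
    refine Finset.prod_le_prod (fun i _ => abs_nonneg _) (fun i hi => ?_)
    have him : (i : ℝ) ≤ (m : ℝ) := by
      exact_mod_cast (Finset.mem_range.mp hi).le
    have h1 : |(k : ℝ) + a - i * lam| ≤ |(k : ℝ)| + |a| + (i : ℝ) * |lam| := by
      calc |(k : ℝ) + a - i * lam| ≤ |(k : ℝ) + a| + |(i : ℝ) * lam| := abs_sub _ _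
        _ ≤ (|(k : ℝ)| + |a|) + (i : ℝ) * |lam| := by
            rw [abs_mul, Nat.abs_cast]
            exact add_le_add (abs_add_le _ _) le_rfl
    have hk0 : |(k : ℝ)| = (k : ℝ) := abs_of_nonneg (Nat.cast_nonneg k)
    have hkk : (0:ℝ) ≤ (k : ℝ) := Nat.cast_nonneg k
    nlinarith [abs_nonneg lam, abs_nonneg a, mul_le_mul_of_nonneg_right him (abs_nonneg lam)]
  gcongr

/-- Degenerate Bell polynomial `Bel_{n,λ}(x) = e^{-x} ∑_{k≥0} (k)_{n,λ} x^k / k!`. -/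
noncomputable def Bel (lam x : ℝ) (n : ℕ) : ℝ :=
  Real.exp (-x) * ∑' k : ℕ, degFall lam (k : ℝ) n * x ^ k / (Nat.factorial k)

/-- recurrence for the degenerate Bell numbers. -/
theorem degenerate_bell_number_recurrence (lam : ℝ) (n : ℕ) :
    Bel lam 1 (n + 1) =
      ∑ m ∈ range (n + 1), (n.choose m : ℝ) * Bel lam 1 m * degFall lam 1 (n - m + 1) := by
  have hs0 : ∀ m : ℕ, Summable (fun k : ℕ => degFall lam (k : ℝ) m / (k.factorial : ℝ)) :=
    fun m => (summable_degFall lam 0 m).congr (fun k => by rw [add_zero])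
  set T : ℕ → ℝ := fun m => ∑' k : ℕ, degFall lam (k : ℝ) m / (k.factorial : ℝ) with hT
  have hBel : ∀ m : ℕ, Bel lam 1 m = Real.exp (-1) * T m := by
    intro m
    unfold Bel
    simp [hT]
  have hd1 : ∀ j : ℕ, degFall lam 1 (j + 1) = degFall lam (1 - lam) j := by
    intro j; rw [degFall_succ_left, one_mul]
  have key : T (n+1) = ∑ m ∈ range (n+1), (n.choose m : ℝ) * T m * degFall lam 1 (n - m + 1) := by
    have h0 : degFall lam 0 (n+1) = 0 := by rw [degFall_succ_left, zero_mul]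
    calc T (n+1)
        = degFall lam ((0:ℕ) : ℝ) (n+1) / ((0:ℕ).factorial : ℝ)
            + ∑' k : ℕ, degFall lam (((k+1 : ℕ)) : ℝ) (n+1) / (((k+1).factorial : ℕ) : ℝ) :=
          Summable.tsum_eq_zero_add (hs0 (n+1))
      _ = ∑' k : ℕ, ∑ m ∈ range (n+1), ((n.choose m : ℝ) * degFall lam (1-lam) (n-m))
            * (degFall lam (k:ℝ) m / (k.factorial : ℝ)) := by
          rw [Nat.cast_zero, h0, zero_div, zero_add]
          refine tsum_congr fun k => ?_
          have hk1 : ((k:ℝ)+1) ≠ 0 := by positivity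
          rw [Nat.cast_succ, degFall_succ_left,
            show ((k:ℝ) + 1 - lam) = (k:ℝ) + (1 - lam) by ring,
            degFall_add, Finset.Nat.sum_antidiagonal_eq_sum_range_succ_mk,
            Nat.factorial_succ, Nat.cast_mul, Nat.cast_succ,
            mul_div_mul_left _ _ hk1, Finset.sum_div]
          exact sum_congr rfl fun m _ => by ring
      _ = ∑ m ∈ range (n+1), ∑' k : ℕ, ((n.choose m : ℝ) * degFall lam (1-lam) (n-m))
            * (degFall lam (k:ℝ) m / (k.factorial : ℝ)) :=
          Summable.tsum_finsetSum (fun m _ => (hs0 m).mul_left _)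
      _ = ∑ m ∈ range (n+1), (n.choose m : ℝ) * T m * degFall lam 1 (n - m + 1) := by
          refine sum_congr rfl fun m hm => ?_
          rw [tsum_mul_left, hd1]
          ring
  rw [hBel, key, mul_sum]
  refine sum_congr rfl fun m hm => ?_
  rw [hBel]
  ring
end

section
/- For every integer n ≥ 1 and all real x, the derivative of the degenerate Bell polynomial satisfies Bel'_{n,λ}(x) = ∑_{m=0}^{n-1} C(n,m) · Bel_{m,λ}(x) · (1)_{n-m,λ}. -/
open Finset

/-- Ordinary falling factorial `(x)_k`. -/
noncomputable def fall (x : ℝ) (k : ℕ) : ℝ := ∏ i ∈ Finset.range k, (x - i)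

lemma degFall_succ (lam x : ℝ) (n : ℕ) :
    degFall lam x (n+1) = degFall lam x n * (x - n * lam) := by
  simp [degFall, Finset.prod_range_succ]

lemma fall_succ (x : ℝ) (k : ℕ) : fall x (k+1) = fall x k * (x - k) := by
  simp [fall, Finset.prod_range_succ]

lemma fall_shift (x : ℝ) (k : ℕ) : fall (x+1) (k+1) = fall x k * (x+1) := by
  unfold fall
  rw [Finset.prod_range_succ']
  congr 1
  · apply Finset.prod_congr rfl; intro i _; push_cast; ring
  · simp

lemma fall_shift' (x : ℝ) (k : ℕ) :
    fall (x+1) (k+1) = fall x (k+1) + (k+1) * fall x k := by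
  rw [fall_shift, fall_succ]; ring

/-- Vandermonde-type convolution for the degenerate falling factorial. -/
lemma degFall_add_s6 (lam : ℝ) (n : ℕ) (x y : ℝ) :
    degFall lam (x + y) n =
      ∑ m ∈ range (n+1), (n.choose m : ℝ) * degFall lam x m * degFall lam y (n - m) := by
  induction n with
  | zero => simp [degFall]
  | succ n ih =>
    rw [degFall_succ, ih, Finset.sum_mul]
    have key : ∀ m ∈ range (n+1),
        (n.choose m : ℝ) * degFall lam x m * degFall lam y (n - m) * (x + y - n * lam)
        = (n.choose m : ℝ) * (degFall lam x (m+1) * degFall lam y (n - m))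
          + (n.choose m : ℝ) * (degFall lam x m * degFall lam y (n - m + 1)) := by
      intro m hm
      have hm' : m ≤ n := Nat.lt_succ_iff.mp (mem_range.mp hm)
      rw [degFall_succ, degFall_succ]
      have hc : ((n - m : ℕ) : ℝ) = (n : ℝ) - m := by
        rw [Nat.cast_sub hm']
      rw [hc]; ring
    rw [Finset.sum_congr rfl key, Finset.sum_add_distrib]
    have hrhs : ∑ m ∈ range (n+2), ((n+1).choose m : ℝ) * degFall lam x m * degFall lam y (n+1-m)
        = (∑ m ∈ range (n+1), ((n+1).choose (m+1) : ℝ) * degFall lam x (m+1) * degFall lam y (n-m))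
          + degFall lam y (n+1) := by
      rw [Finset.sum_range_succ']
      simp [degFall]
    rw [hrhs]
    have pascal : ∀ m ∈ range (n+1),
        ((n+1).choose (m+1) : ℝ) * degFall lam x (m+1) * degFall lam y (n-m)
        = (n.choose m : ℝ) * (degFall lam x (m+1) * degFall lam y (n-m))
          + (n.choose (m+1) : ℝ) * (degFall lam x (m+1) * degFall lam y (n-m)) := by
      intro m hm
      rw [Nat.choose_succ_succ n m]
      push_cast; ring
    rw [Finset.sum_congr rfl pascal, Finset.sum_add_distrib]
    have hS : ∑ m ∈ range (n+1), (n.choose m : ℝ) * (degFall lam x m * degFall lam y (n - m + 1))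
        = (∑ m ∈ range (n+1), (n.choose (m+1) : ℝ) * (degFall lam x (m+1) * degFall lam y (n-m)))
          + degFall lam y (n+1) := by
      rw [Finset.sum_range_succ' (fun m => (n.choose m : ℝ) * (degFall lam x m * degFall lam y (n - m + 1)))]
      rw [Finset.sum_range_succ]
      simp only [Nat.choose_succ_self, Nat.cast_zero, zero_mul, add_zero, Nat.choose_zero_right,
        Nat.cast_one, one_mul, Nat.sub_zero]
      have h0 : degFall lam x 0 * degFall lam y (n + 1) = degFall lam y (n+1) := by
        simp [degFall]
      rw [h0]
      congr 1
      apply Finset.sum_congr rfl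
      intro m hm
      have hm' := mem_range.mp hm
      have : n - (m+1) + 1 = n - m := by omega
      rw [this]
    rw [hS]
    ring

lemma fall_nat_eq_zero (j k : ℕ) (h : j < k) : fall (j:ℝ) k = 0 := by
  apply Finset.prod_eq_zero (Finset.mem_range.mpr h)
  simp

lemma fall_nat_ne_zero (k : ℕ) : fall (k:ℝ) k ≠ 0 := by
  apply Finset.prod_ne_zero_iff.mpr
  intro i hi
  have h : i < k := Finset.mem_range.mp hi
  have h' : (i:ℝ) < k := by exact_mod_cast h
  exact sub_ne_zero.mpr (ne_of_gt h')

/-- Linear independence of the falling factorials. -/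
lemma fall_indep (N : ℕ) (a : ℕ → ℝ)
    (h : ∀ x : ℝ, ∑ k ∈ range N, a k * fall x k = 0) :
    ∀ k, k < N → a k = 0 := by
  intro k
  induction k using Nat.strong_induction_on with
  | _ k ih =>
    intro hk
    have hx := h (k : ℝ)
    have hsum : ∑ j ∈ range N, a j * fall (k:ℝ) j = a k * fall (k:ℝ) k := by
      apply Finset.sum_eq_single
      · intro j hj hne
        rcases lt_or_gt_of_ne hne with h1 | h2
        · rw [ih j h1 (lt_trans h1 hk)]; ring
        · rw [fall_nat_eq_zero k j h2]; ring
      · intro hcon; exact (hcon (Finset.mem_range.mpr hk)).elim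
    rw [hsum] at hx
    exact (mul_eq_zero.mp hx).resolve_right (fall_nat_ne_zero k)

/-- Exchange of summation used on both sides. -/
lemma swap_sum (n : ℕ) (c d : ℕ → ℝ) (S : ℕ → ℕ → ℝ) (φ : ℕ → ℝ) :
    ∑ m ∈ range n, c m * (∑ k ∈ range (m+1), S m k * φ k) * d m
    = ∑ k ∈ range n, (∑ m ∈ range n, c m * (if k < m+1 then S m k else 0) * d m) * φ k := by
  have h1 : ∀ m ∈ range n,
      c m * (∑ k ∈ range (m+1), S m k * φ k) * d m
      = ∑ k ∈ range n, c m * (if k < m+1 then S m k else 0) * d m * φ k := by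
    intro m hm
    have hm' := mem_range.mp hm
    have hsub : range (m+1) ⊆ range n := by
      intro k hk
      have := mem_range.mp hk
      exact mem_range.mpr (by omega)
    rw [← Finset.sum_subset hsub]
    · rw [Finset.mul_sum, Finset.sum_mul]
      apply Finset.sum_congr rfl
      intro k hk
      rw [if_pos (mem_range.mp hk)]
      ring
    · intro k _ hk
      rw [if_neg (fun h => hk (mem_range.mpr h))]
      ring
  rw [Finset.sum_congr rfl h1, Finset.sum_comm]
  apply Finset.sum_congr rfl
  intro k _
  rw [Finset.sum_mul]

/-- with `Bel_{n,λ}(x) = ∑_{k=0}^n S_{2,λ}(n,k) x^k`, one has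
`Bel'_{n,λ}(x) = ∑_{m=0}^{n-1} C(n,m) Bel_m(x) (1)_{n-m,λ}` for `n ≥ 1`. -/
theorem deriv_degenerate_bell (lam : ℝ) (S2 : ℕ → ℕ → ℝ)
    (hS2 : ∀ (n : ℕ) (x : ℝ), degFall lam x n = ∑ k ∈ range (n + 1), S2 n k * fall x k)
    (n : ℕ) (hn : 1 ≤ n) (x : ℝ) :
    deriv (fun y => ∑ k ∈ range (n + 1), S2 n k * y ^ k) x =
      ∑ m ∈ range n, (n.choose m : ℝ) * (∑ k ∈ range (m + 1), S2 m k * x ^ k) *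
        degFall lam 1 (n - m) := by
  -- Step 1: identity in the falling-factorial basis
  have step1 : ∀ z : ℝ,
      ∑ k ∈ range n, (((k:ℝ)+1) * S2 n (k+1)) * fall z k
      = ∑ m ∈ range n, (n.choose m : ℝ) * (∑ k ∈ range (m+1), S2 m k * fall z k) *
          degFall lam 1 (n - m) := by
    intro z
    have hV := degFall_add_s6 lam n z 1
    rw [hS2 n (z+1)] at hV
    have hL : ∑ k ∈ range (n+1), S2 n k * fall (z+1) k
        = (∑ k ∈ range (n+1), S2 n k * fall z k)
          + ∑ k ∈ range n, (((k:ℝ)+1) * S2 n (k+1)) * fall z k := by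
      rw [Finset.sum_range_succ' (fun k => S2 n k * fall (z+1) k)]
      rw [Finset.sum_range_succ' (fun k => S2 n k * fall z k)]
      have hterm : ∀ k ∈ range n, S2 n (k+1) * fall (z+1) (k+1)
          = S2 n (k+1) * fall z (k+1) + (((k:ℝ)+1) * S2 n (k+1)) * fall z k := by
        intro k _
        rw [fall_shift']
        push_cast; ring
      rw [Finset.sum_congr rfl hterm, Finset.sum_add_distrib]
      have hz1 : fall (z+1) 0 = 1 := by simp [fall]
      have hz2 : fall z 0 = 1 := by simp [fall]
      rw [hz1, hz2]
      ring
    have hR : ∑ m ∈ range (n+1), (n.choose m : ℝ) * degFall lam z m * degFall lam 1 (n - m)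
        = (∑ m ∈ range n, (n.choose m : ℝ) *
            (∑ k ∈ range (m+1), S2 m k * fall z k) * degFall lam 1 (n - m))
          + ∑ k ∈ range (n+1), S2 n k * fall z k := by
      rw [Finset.sum_range_succ]
      have h1 : (n.choose n : ℝ) * degFall lam z n * degFall lam 1 (n - n) =
          ∑ k ∈ range (n+1), S2 n k * fall z k := by
        rw [hS2 n z]
        simp [degFall]
      rw [h1]
      congr 1
      apply Finset.sum_congr rfl
      intro m _
      rw [hS2 m z]
    rw [hL, hR] at hV
    linarith
  -- Step 2: coefficient identity via linear independence
  set b : ℕ → ℝ := fun k => ∑ m ∈ range n,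
      (n.choose m : ℝ) * (if k < m+1 then S2 m k else 0) * degFall lam 1 (n - m) with hb
  have step2 : ∀ k, k < n → ((k:ℝ)+1) * S2 n (k+1) = b k := by
    have hzero : ∀ z : ℝ,
        ∑ k ∈ range n, ((((k:ℝ)+1) * S2 n (k+1)) - b k) * fall z k = 0 := by
      intro z
      have h := step1 z
      rw [swap_sum n (fun m => (n.choose m : ℝ)) (fun m => degFall lam 1 (n - m)) S2
        (fun k => fall z k)] at h
      simp only [sub_mul, Finset.sum_sub_distrib]
      rw [h]
      simp [hb]
    intro k hk
    have h2 : (((k:ℝ)+1) * S2 n (k+1)) - b k = 0 :=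
      fall_indep n (fun k => (((k:ℝ)+1) * S2 n (k+1)) - b k) hzero k hk
    linarith
  -- Step 3: compute the derivative
  have hd : deriv (fun y => ∑ k ∈ range (n + 1), S2 n k * y ^ k) x
      = ∑ k ∈ range (n+1), S2 n k * ((k : ℝ) * x ^ (k-1)) := by
    rw [deriv_fun_sum (fun k _ => (differentiableAt_pow k).const_mul (S2 n k))]
    apply Finset.sum_congr rfl
    intro k _
    rw [deriv_const_mul _ (differentiableAt_pow k), deriv_pow_field]
  rw [hd]
  rw [Finset.sum_range_succ' (fun k => S2 n k * ((k : ℝ) * x ^ (k-1)))]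
  have h0 : S2 n 0 * ((0:ℕ) * x ^ (0-1)) = 0 := by simp
  rw [h0, add_zero]
  have hcoef : ∀ k ∈ range n,
      S2 n (k+1) * (((k+1 : ℕ) : ℝ) * x ^ (k+1-1)) = (((k:ℝ)+1) * S2 n (k+1)) * x ^ k := by
    intro k _
    push_cast
    ring_nf
  rw [Finset.sum_congr rfl hcoef]
  have hfinal : ∑ k ∈ range n, (((k:ℝ)+1) * S2 n (k+1)) * x ^ k
      = ∑ k ∈ range n, b k * x ^ k := by
    apply Finset.sum_congr rfl
    intro k hk
    rw [step2 k (mem_range.mp hk)]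
  rw [hfinal, hb]
  exact (swap_sum n (fun m => (n.choose m : ℝ)) (fun m => degFall lam 1 (n - m)) S2
    (fun k => x ^ k)).symm
end
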